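/- Let b_1 > b_2 > 0, and assume (b_1 − b_2)·λ > 1 for every eigenvalue λ of Q_S for every nonempty S ⊆ V (so Q_S and (b_1 − b_2) Q_S − I are invertible for every nonempty S). Define the set function f on subsets of V by f(∅) = 0 and, for nonempty S, f(S) = C − tr( Q_S⁻² (b_1 Q_S − I) ((b_1 − b_2) Q_S − I)⁻¹ ), where C = 2·max over single nodes s ∈ V of tr( Q_{{s}}⁻² (b_1 Q_{{s}} − I) ((b_1 − b_2) Q_{{s}} − I)⁻¹ ). Then f is non-decreasing and submodular. -/

import Mathlib

open Matrix Finset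

variable {N : ℕ}

/-- Entry-wise nonnegativity of the inverse of a symmetric positive-definite Z-matrix. -/
lemma zmat_inv_nonneg (A : Matrix (Fin N) (Fin N) ℝ)
    (hpd : A.PosDef) (hoff : ∀ i j, i ≠ j → A i j ≤ 0) :
    ∀ i j, 0 ≤ A⁻¹ i j := by
  have hsymm : Aᵀ = A := by
    have := hpd.isHermitian.eq
    ext i j
    calc Aᵀ i j = A j i := rfl
      _ = Aᴴ i j := by simp [Matrix.conjTranspose_apply]
      _ = A i j := by rw [this]
  intro i j
  set x : Fin N → ℝ := fun k => A⁻¹ k j with hxdef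
  have hmul : A * A⁻¹ = 1 := Matrix.mul_nonsing_inv A hpd.det_pos.ne'.isUnit
  have hx : A *ᵥ x = Pi.single j 1 := by
    funext k
    have h1 : (A *ᵥ x) k = (A * A⁻¹) k j := by
      simp [Matrix.mulVec, Matrix.mul_apply, dotProduct, hxdef]
    rw [h1, hmul]
    simp [Matrix.one_apply, Pi.single_apply]
  set y : Fin N → ℝ := fun k => |x k| with hydef
  -- quadratic comparisons
  have hswap : ∀ v w : Fin N → ℝ, v ⬝ᵥ (A *ᵥ w) = (A *ᵥ v) ⬝ᵥ w := by
    intro v w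
    rw [Matrix.dotProduct_mulVec]
    congr 1
    conv_lhs => rw [← hsymm]
    exact Matrix.vecMul_transpose A v
  have hyAy_le : y ⬝ᵥ (A *ᵥ y) ≤ x ⬝ᵥ (A *ᵥ x) := by
    simp only [dotProduct, Matrix.mulVec, Finset.mul_sum]
    apply Finset.sum_le_sum
    intro i _
    apply Finset.sum_le_sum
    intro k _
    rcases eq_or_ne i k with rfl | hik
    · apply le_of_eq
      show y i * (A i i * y i) = x i * (A i i * x i)
      simp only [hydef]
      calc |x i| * (A i i * |x i|) = A i i * (|x i| * |x i|) := by ring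
        _ = A i i * (x i * x i) := by rw [abs_mul_abs_self]
        _ = x i * (A i i * x i) := by ring
    · have h1 : y i * (A i k * y k) = A i k * (y i * y k) := by ring
      have h2 : x i * (A i k * x k) = A i k * (x i * x k) := by ring
      rw [h1, h2]
      apply mul_le_mul_of_nonpos_left _ (hoff i k hik)
      calc x i * x k ≤ |x i * x k| := le_abs_self _
        _ = y i * y k := by simp [hydef, abs_mul]
  have hxj_le : x j ≤ y j := le_abs_self _
  set z : Fin N → ℝ := y - x with hzdef
  have hquad : z ⬝ᵥ (A *ᵥ z) = y ⬝ᵥ (A *ᵥ y) - 2 * y j + x j := by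
    have hAx : ∀ v : Fin N → ℝ, v ⬝ᵥ (A *ᵥ x) = v j := by
      intro v; rw [hx, dotProduct_single, mul_one]
    have hxA : x ⬝ᵥ (A *ᵥ y) = y j := by rw [hswap, hx, single_dotProduct, one_mul]
    have : z ⬝ᵥ (A *ᵥ z) = y ⬝ᵥ (A *ᵥ y) - y ⬝ᵥ (A *ᵥ x) - (x ⬝ᵥ (A *ᵥ y) - x ⬝ᵥ (A *ᵥ x)) := by
      simp only [hzdef, Matrix.mulVec_sub, dotProduct_sub, sub_dotProduct]
      ring
    rw [this, hAx y, hAx x, hxA]; ring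
  have hz0 : z = 0 := by
    by_contra hne
    have hpos : 0 < z ⬝ᵥ (A *ᵥ z) := by
      have := hpd.dotProduct_mulVec_pos hne
      simpa using this
    have hle : z ⬝ᵥ (A *ᵥ z) ≤ 0 := by
      rw [hquad]
      have : y ⬝ᵥ (A *ᵥ y) - 2 * y j + x j ≤ x ⬝ᵥ (A *ᵥ x) - 2 * x j + x j := by linarith
      have hxAx : x ⬝ᵥ (A *ᵥ x) = x j := by rw [hx, dotProduct_single, mul_one]
      linarith [hxAx ▸ this]
    linarith
  have : x i = |x i| := by
    have := congrFun hz0 i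
    simp only [hzdef, Pi.sub_apply, Pi.zero_apply, sub_eq_zero] at this
    exact this.symm
  rw [show A⁻¹ i j = x i from rfl, this]
  exact abs_nonneg _

lemma matInvSubInv (A C : Matrix (Fin N) (Fin N) ℝ)
    (hA : IsUnit A.det) (hC : IsUnit C.det) :
    A⁻¹ - C⁻¹ = A⁻¹ * (C - A) * C⁻¹ := by
  rw [Matrix.mul_sub, Matrix.sub_mul, Matrix.nonsing_inv_mul A hA, mul_assoc,
    Matrix.mul_nonsing_inv C hC, Matrix.one_mul, Matrix.mul_one]

lemma entry_mul_nonneg {X Y : Matrix (Fin N) (Fin N) ℝ}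
    (hX : ∀ i j, 0 ≤ X i j) (hY : ∀ i j, 0 ≤ Y i j) :
    ∀ i j, 0 ≤ (X * Y) i j := by
  intro i j
  rw [Matrix.mul_apply]
  exact Finset.sum_nonneg fun k _ => mul_nonneg (hX i k) (hY k j)

lemma entry_mul_mono {X X' Y Y' : Matrix (Fin N) (Fin N) ℝ}
    (hX : ∀ i j, 0 ≤ X i j) (hY : ∀ i j, 0 ≤ Y i j)
    (hXle : ∀ i j, X i j ≤ X' i j) (hYle : ∀ i j, Y i j ≤ Y' i j) :
    ∀ i j, (X * Y) i j ≤ (X' * Y') i j := by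
  intro i j
  rw [Matrix.mul_apply, Matrix.mul_apply]
  apply Finset.sum_le_sum
  intro k _
  exact mul_le_mul (hXle i k) (hYle k j) (hY k j) (le_trans (hX i k) (hXle i k))

/-- antitone of inverse entries -/
lemma inv_entry_anti {A C : Matrix (Fin N) (Fin N) ℝ}
    (hA : IsUnit A.det) (hC : IsUnit C.det)
    (hle : ∀ i j, A i j ≤ C i j)
    (hiA : ∀ i j, 0 ≤ A⁻¹ i j) (hiC : ∀ i j, 0 ≤ C⁻¹ i j) :
    ∀ i j, C⁻¹ i j ≤ A⁻¹ i j := by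
  intro i j
  have h := matInvSubInv A C hA hC
  have hent : 0 ≤ (A⁻¹ * (C - A) * C⁻¹) i j := by
    apply entry_mul_nonneg _ hiC
    apply entry_mul_nonneg hiA
    intro i j
    simp only [Matrix.sub_apply, sub_nonneg]
    exact hle i j
  have := congrFun (congrFun h i) j
  simp only [Matrix.sub_apply] at this
  linarith [hent, this.ge, this.le]

lemma trace_diag_mul (d : Fin N → ℝ) (X : Matrix (Fin N) (Fin N) ℝ) :
    Matrix.trace (Matrix.diagonal d * X) = ∑ i, d i * X i i := by
  simp [Matrix.trace, Matrix.diag, Matrix.mul_apply, Matrix.diagonal_apply]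

lemma trace_mul_nonneg_ent {X Y : Matrix (Fin N) (Fin N) ℝ}
    (hX : ∀ i j, 0 ≤ X i j) (hY : ∀ i j, 0 ≤ Y i j) :
    0 ≤ Matrix.trace (X * Y) := by
  rw [Matrix.trace]
  apply Finset.sum_nonneg
  intro i _
  exact entry_mul_nonneg hX hY i i

lemma trace_XMY (M X Y : Matrix (Fin N) (Fin N) ℝ) :
    Matrix.trace (X * M * Y) = Matrix.trace (M * (Y * X)) := by
  rw [mul_assoc, Matrix.trace_mul_comm, ← mul_assoc, Matrix.trace_mul_comm]

/-- the auxiliary matrix functional -/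
noncomputable def Gfun (c γ : ℝ) (A : Matrix (Fin N) (Fin N) ℝ) : ℝ :=
  Matrix.trace (A⁻¹ * A⁻¹) +
    γ * Matrix.trace (A⁻¹ * (A - c • (1 : Matrix (Fin N) (Fin N) ℝ))⁻¹)

/-- symmetric positive definite Z-matrix whose shift by `c` is also positive definite -/
def ZGood (c : ℝ) (A : Matrix (Fin N) (Fin N) ℝ) : Prop :=
  A.PosDef ∧ (A - c • (1 : Matrix (Fin N) (Fin N) ℝ)).PosDef ∧ (∀ i j, i ≠ j → A i j ≤ 0)

lemma ZGood.detA {c : ℝ} {A : Matrix (Fin N) (Fin N) ℝ} (h : ZGood c A) : IsUnit A.det :=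
  h.1.det_pos.ne'.isUnit

lemma ZGood.detB {c : ℝ} {A : Matrix (Fin N) (Fin N) ℝ} (h : ZGood c A) :
    IsUnit (A - c • (1 : Matrix (Fin N) (Fin N) ℝ)).det :=
  h.2.1.det_pos.ne'.isUnit

lemma ZGood.offB {c : ℝ} {A : Matrix (Fin N) (Fin N) ℝ} (h : ZGood c A) :
    ∀ i j, i ≠ j → (A - c • (1 : Matrix (Fin N) (Fin N) ℝ)) i j ≤ 0 := by
  intro i j hij
  simp only [Matrix.sub_apply, Matrix.smul_apply, Matrix.one_apply_ne hij, smul_zero, sub_zero]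
  exact h.2.2 i j hij

lemma ZGood.invA_nonneg {c : ℝ} {A : Matrix (Fin N) (Fin N) ℝ} (h : ZGood c A) :
    ∀ i j, 0 ≤ A⁻¹ i j :=
  zmat_inv_nonneg A h.1 h.2.2

lemma ZGood.invB_nonneg {c : ℝ} {A : Matrix (Fin N) (Fin N) ℝ} (h : ZGood c A) :
    ∀ i j, 0 ≤ (A - c • (1 : Matrix (Fin N) (Fin N) ℝ))⁻¹ i j :=
  zmat_inv_nonneg _ h.2.1 h.offB

lemma Gfun_nonneg {c γ : ℝ} (hγ : 0 ≤ γ) {A : Matrix (Fin N) (Fin N) ℝ} (h : ZGood c A) :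
    0 ≤ Gfun c γ A := by
  have h1 := trace_mul_nonneg_ent h.invA_nonneg h.invA_nonneg
  have h2 := trace_mul_nonneg_ent h.invA_nonneg h.invB_nonneg
  exact add_nonneg h1 (mul_nonneg hγ h2)

/-- The first-difference expansion of `Gfun`. -/
lemma Gfun_delta (c γ : ℝ) (A M : Matrix (Fin N) (Fin N) ℝ)
    (hA : IsUnit A.det) (hR : IsUnit (A + M).det)
    (hB : IsUnit (A - c • (1 : Matrix (Fin N) (Fin N) ℝ)).det)
    (hBR : IsUnit (A + M - c • (1 : Matrix (Fin N) (Fin N) ℝ)).det) :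
    Gfun c γ A - Gfun c γ (A + M) =
      Matrix.trace (M * ((A + M)⁻¹ * (A⁻¹ * A⁻¹))) +
      Matrix.trace (M * ((A + M)⁻¹ * ((A + M)⁻¹ * A⁻¹))) +
      γ * (Matrix.trace (M * ((A + M)⁻¹ *
            ((A - c • (1 : Matrix (Fin N) (Fin N) ℝ))⁻¹ * A⁻¹))) +
           Matrix.trace (M * ((A + M - c • (1 : Matrix (Fin N) (Fin N) ℝ))⁻¹ *
            ((A + M)⁻¹ * (A - c • (1 : Matrix (Fin N) (Fin N) ℝ))⁻¹)))) := by
  set R := A + M with hRdef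
  set B := A - c • (1 : Matrix (Fin N) (Fin N) ℝ) with hBdef
  set BR := A + M - c • (1 : Matrix (Fin N) (Fin N) ℝ) with hBRdef
  have hdiff : A⁻¹ - R⁻¹ = A⁻¹ * M * R⁻¹ := by
    have := matInvSubInv A R hA hR
    rwa [hRdef, add_sub_cancel_left] at this
  have hdiffB : B⁻¹ - BR⁻¹ = B⁻¹ * M * BR⁻¹ := by
    have := matInvSubInv B BR hB hBR
    have hBRB : BR - B = M := by rw [hBRdef, hBdef]; abel
    rwa [hBRB] at this
  have t1 : Matrix.trace (A⁻¹ * A⁻¹) - Matrix.trace (R⁻¹ * R⁻¹) =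
      Matrix.trace (M * (R⁻¹ * (A⁻¹ * A⁻¹))) + Matrix.trace (M * (R⁻¹ * (R⁻¹ * A⁻¹))) := by
    have hsplit : A⁻¹ * A⁻¹ - R⁻¹ * R⁻¹ = (A⁻¹ - R⁻¹) * A⁻¹ + R⁻¹ * (A⁻¹ - R⁻¹) := by
      rw [Matrix.sub_mul, Matrix.mul_sub]; abel
    have := congrArg Matrix.trace hsplit
    rw [Matrix.trace_sub, Matrix.trace_add, hdiff] at this
    rw [this]
    congr 1
    · rw [show A⁻¹ * M * R⁻¹ * A⁻¹ = A⁻¹ * M * (R⁻¹ * A⁻¹) by rw [mul_assoc]]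
      rw [trace_XMY M A⁻¹ (R⁻¹ * A⁻¹), mul_assoc]
    · rw [show R⁻¹ * (A⁻¹ * M * R⁻¹) = (R⁻¹ * A⁻¹) * M * R⁻¹ by
        rw [← mul_assoc, ← mul_assoc]]
      rw [trace_XMY M (R⁻¹ * A⁻¹) R⁻¹]
  have t2 : Matrix.trace (A⁻¹ * B⁻¹) - Matrix.trace (R⁻¹ * BR⁻¹) =
      Matrix.trace (M * (R⁻¹ * (B⁻¹ * A⁻¹))) + Matrix.trace (M * (BR⁻¹ * (R⁻¹ * B⁻¹))) := by
    have hsplit : A⁻¹ * B⁻¹ - R⁻¹ * BR⁻¹ = (A⁻¹ - R⁻¹) * B⁻¹ + R⁻¹ * (B⁻¹ - BR⁻¹) := by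
      rw [Matrix.sub_mul, Matrix.mul_sub]; abel
    have := congrArg Matrix.trace hsplit
    rw [Matrix.trace_sub, Matrix.trace_add, hdiff, hdiffB] at this
    rw [this]
    congr 1
    · rw [show A⁻¹ * M * R⁻¹ * B⁻¹ = A⁻¹ * M * (R⁻¹ * B⁻¹) by rw [mul_assoc]]
      rw [trace_XMY M A⁻¹ (R⁻¹ * B⁻¹), mul_assoc]
    · rw [show R⁻¹ * (B⁻¹ * M * BR⁻¹) = (R⁻¹ * B⁻¹) * M * BR⁻¹ by
        rw [← mul_assoc, ← mul_assoc]]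
      rw [trace_XMY M (R⁻¹ * B⁻¹) BR⁻¹]
  have hGA : Gfun c γ A = Matrix.trace (A⁻¹ * A⁻¹) + γ * Matrix.trace (A⁻¹ * B⁻¹) := rfl
  have hGR : Gfun c γ R = Matrix.trace (R⁻¹ * R⁻¹) + γ * Matrix.trace (R⁻¹ * BR⁻¹) := rfl
  rw [hGA, hGR]
  linear_combination t1 + γ * t2

lemma trace_diagmul_mono {d : Fin N → ℝ} (hd : ∀ i, 0 ≤ d i)
    {X X' : Matrix (Fin N) (Fin N) ℝ} (h : ∀ i j, X' i j ≤ X i j) :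
    Matrix.trace (Matrix.diagonal d * X') ≤ Matrix.trace (Matrix.diagonal d * X) := by
  rw [trace_diag_mul, trace_diag_mul]
  exact Finset.sum_le_sum fun i _ => mul_le_mul_of_nonneg_left (h i i) (hd i)

lemma trace_diagmul_nonneg {d : Fin N → ℝ} (hd : ∀ i, 0 ≤ d i)
    {X : Matrix (Fin N) (Fin N) ℝ} (h : ∀ i j, 0 ≤ X i j) :
    0 ≤ Matrix.trace (Matrix.diagonal d * X) := by
  rw [trace_diag_mul]
  exact Finset.sum_nonneg fun i _ => mul_nonneg (hd i) (h i i)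

lemma Gfun_antitone (c γ : ℝ) (hγ : 0 ≤ γ) (A : Matrix (Fin N) (Fin N) ℝ)
    (d : Fin N → ℝ) (hd : ∀ i, 0 ≤ d i)
    (hA : ZGood c A) (hAM : ZGood c (A + Matrix.diagonal d)) :
    Gfun c γ (A + Matrix.diagonal d) ≤ Gfun c γ A := by
  have hdelta := Gfun_delta c γ A (Matrix.diagonal d) hA.detA hAM.detA hA.detB hAM.detB
  have h1 := trace_diagmul_nonneg hd (entry_mul_nonneg hAM.invA_nonneg
    (entry_mul_nonneg hA.invA_nonneg hA.invA_nonneg))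
  have h2 := trace_diagmul_nonneg hd (entry_mul_nonneg hAM.invA_nonneg
    (entry_mul_nonneg hAM.invA_nonneg hA.invA_nonneg))
  have h3 := trace_diagmul_nonneg hd (entry_mul_nonneg hAM.invA_nonneg
    (entry_mul_nonneg hA.invB_nonneg hA.invA_nonneg))
  have h4 := trace_diagmul_nonneg hd (entry_mul_nonneg hAM.invB_nonneg
    (entry_mul_nonneg hAM.invA_nonneg hA.invB_nonneg))
  nlinarith [mul_nonneg hγ (add_nonneg h3 h4)]

lemma Gfun_supermod (c γ : ℝ) (hγ : 0 ≤ γ) (P : Matrix (Fin N) (Fin N) ℝ)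
    (dM dN : Fin N → ℝ) (hdM : ∀ i, 0 ≤ dM i) (hdN : ∀ i, 0 ≤ dN i)
    (hP : ZGood c P) (hPM : ZGood c (P + Matrix.diagonal dM))
    (hPN : ZGood c (P + Matrix.diagonal dN))
    (hPMN : ZGood c (P + Matrix.diagonal dM + Matrix.diagonal dN)) :
    Gfun c γ (P + Matrix.diagonal dM) + Gfun c γ (P + Matrix.diagonal dN) ≤
      Gfun c γ P + Gfun c γ (P + Matrix.diagonal dM + Matrix.diagonal dN) := by
  set M := Matrix.diagonal dM with hMdef
  set Nd := Matrix.diagonal dN with hNdef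
  have hMent : ∀ i j, 0 ≤ M i j := by
    intro i j; rw [hMdef, Matrix.diagonal_apply]
    split <;> simp [hdM i]
  have hNent : ∀ i j, 0 ≤ Nd i j := by
    intro i j; rw [hNdef, Matrix.diagonal_apply]
    split <;> simp [hdN i]
  -- entrywise comparisons between base matrices
  have lePN : ∀ i j, P i j ≤ (P + Nd) i j := by
    intro i j; simp only [Matrix.add_apply]; linarith [hNent i j]
  have lePMN : ∀ i j, (P + M) i j ≤ (P + M + Nd) i j := by
    intro i j; simp only [Matrix.add_apply]; linarith [hNent i j]
  have leBPN : ∀ i j, (P - c • (1 : Matrix (Fin N) (Fin N) ℝ)) i j ≤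
      (P + Nd - c • (1 : Matrix (Fin N) (Fin N) ℝ)) i j := by
    intro i j; simp only [Matrix.sub_apply, Matrix.add_apply]; linarith [hNent i j]
  have leBPMN : ∀ i j, (P + M - c • (1 : Matrix (Fin N) (Fin N) ℝ)) i j ≤
      (P + M + Nd - c • (1 : Matrix (Fin N) (Fin N) ℝ)) i j := by
    intro i j; simp only [Matrix.sub_apply, Matrix.add_apply]; linarith [hNent i j]
  -- inverse entry comparisons
  have aP : ∀ i j, (P + Nd)⁻¹ i j ≤ P⁻¹ i j :=
    inv_entry_anti hP.detA hPN.detA lePN hP.invA_nonneg hPN.invA_nonneg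
  have aPM : ∀ i j, (P + M + Nd)⁻¹ i j ≤ (P + M)⁻¹ i j :=
    inv_entry_anti hPM.detA hPMN.detA lePMN hPM.invA_nonneg hPMN.invA_nonneg
  have aBP : ∀ i j, (P + Nd - c • (1 : Matrix (Fin N) (Fin N) ℝ))⁻¹ i j ≤
      (P - c • (1 : Matrix (Fin N) (Fin N) ℝ))⁻¹ i j :=
    inv_entry_anti hP.detB hPN.detB leBPN hP.invB_nonneg hPN.invB_nonneg
  have aBPM : ∀ i j, (P + M + Nd - c • (1 : Matrix (Fin N) (Fin N) ℝ))⁻¹ i j ≤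
      (P + M - c • (1 : Matrix (Fin N) (Fin N) ℝ))⁻¹ i j :=
    inv_entry_anti hPM.detB hPMN.detB leBPMN hPM.invB_nonneg hPMN.invB_nonneg
  -- the two delta expansions
  have d1 := Gfun_delta c γ P M hP.detA hPM.detA hP.detB hPM.detB
  have hcomm : P + Nd + M = P + M + Nd := by abel
  have d2 := Gfun_delta c γ (P + Nd) M hPN.detA (by rw [hcomm]; exact hPMN.detA)
    hPN.detB (by rw [hcomm]; exact hPMN.detB)
  rw [hcomm] at d2
  -- pairwise comparisons of the four trace terms
  have h1 : Matrix.trace (M * ((P + M + Nd)⁻¹ * ((P + Nd)⁻¹ * (P + Nd)⁻¹))) ≤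
      Matrix.trace (M * ((P + M)⁻¹ * (P⁻¹ * P⁻¹))) := by
    rw [hMdef]
    exact trace_diagmul_mono hdM (entry_mul_mono hPMN.invA_nonneg
      (entry_mul_nonneg hPN.invA_nonneg hPN.invA_nonneg) aPM
      (entry_mul_mono hPN.invA_nonneg hPN.invA_nonneg aP aP))
  have h2 : Matrix.trace (M * ((P + M + Nd)⁻¹ * ((P + M + Nd)⁻¹ * (P + Nd)⁻¹))) ≤
      Matrix.trace (M * ((P + M)⁻¹ * ((P + M)⁻¹ * P⁻¹))) := by
    rw [hMdef]
    exact trace_diagmul_mono hdM (entry_mul_mono hPMN.invA_nonneg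
      (entry_mul_nonneg hPMN.invA_nonneg hPN.invA_nonneg) aPM
      (entry_mul_mono hPMN.invA_nonneg hPN.invA_nonneg aPM aP))
  have h3 : Matrix.trace (M * ((P + M + Nd)⁻¹ *
        ((P + Nd - c • (1 : Matrix (Fin N) (Fin N) ℝ))⁻¹ * (P + Nd)⁻¹))) ≤
      Matrix.trace (M * ((P + M)⁻¹ *
        ((P - c • (1 : Matrix (Fin N) (Fin N) ℝ))⁻¹ * P⁻¹))) := by
    rw [hMdef]
    exact trace_diagmul_mono hdM (entry_mul_mono hPMN.invA_nonneg
      (entry_mul_nonneg hPN.invB_nonneg hPN.invA_nonneg) aPM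
      (entry_mul_mono hPN.invB_nonneg hPN.invA_nonneg aBP aP))
  have h4 : Matrix.trace (M * ((P + M + Nd - c • (1 : Matrix (Fin N) (Fin N) ℝ))⁻¹ *
        ((P + M + Nd)⁻¹ * (P + Nd - c • (1 : Matrix (Fin N) (Fin N) ℝ))⁻¹))) ≤
      Matrix.trace (M * ((P + M - c • (1 : Matrix (Fin N) (Fin N) ℝ))⁻¹ *
        ((P + M)⁻¹ * (P - c • (1 : Matrix (Fin N) (Fin N) ℝ))⁻¹))) := by
    rw [hMdef]
    exact trace_diagmul_mono hdM (entry_mul_mono hPMN.invB_nonneg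
      (entry_mul_nonneg hPMN.invA_nonneg hPN.invB_nonneg) aBPM
      (entry_mul_mono hPMN.invA_nonneg hPN.invB_nonneg aPM aBP))
  nlinarith [mul_le_mul_of_nonneg_left (add_le_add h3 h4) hγ]

/-- partial fraction identity at the matrix level -/
lemma trace_eq_Gfun (b₁ b₂ : ℝ) (hb₂ : 0 < b₂) (hab : 0 < b₁ - b₂)
    (A : Matrix (Fin N) (Fin N) ℝ) (hA : IsUnit A.det)
    (hB : IsUnit (A - (b₁ - b₂)⁻¹ • (1 : Matrix (Fin N) (Fin N) ℝ)).det) :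
    Matrix.trace (A⁻¹ * A⁻¹ * (b₁ • A - (1 : Matrix (Fin N) (Fin N) ℝ)) *
        ((b₁ - b₂) • A - (1 : Matrix (Fin N) (Fin N) ℝ))⁻¹) =
      Gfun ((b₁ - b₂)⁻¹) (b₂ * (b₁ - b₂)⁻¹) A := by
  set a := b₁ - b₂ with hadef
  set c := a⁻¹ with hcdef
  set B := A - c • (1 : Matrix (Fin N) (Fin N) ℝ) with hBdef
  have hac : a * c = 1 := mul_inv_cancel₀ hab.ne'
  have h1 : a • A - (1 : Matrix (Fin N) (Fin N) ℝ) = a • B := by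
    rw [hBdef, smul_sub, smul_smul, hac, one_smul]
  have h2 : (a • A - (1 : Matrix (Fin N) (Fin N) ℝ))⁻¹ = c • B⁻¹ := by
    rw [h1]
    apply Matrix.inv_eq_right_inv
    rw [Matrix.smul_mul, Matrix.mul_smul, smul_smul, hac, Matrix.mul_nonsing_inv B hB, one_smul]
  have h3 : b₁ • A - (1 : Matrix (Fin N) (Fin N) ℝ) = a • B + b₂ • A := by
    rw [← h1, sub_add_eq_add_sub, ← add_smul]
    congr 2
    rw [hadef]; ring
  rw [h2, h3]
  have e1 : A⁻¹ * A⁻¹ * B * B⁻¹ = A⁻¹ * A⁻¹ := by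
    rw [mul_assoc (A⁻¹ * A⁻¹) B B⁻¹, Matrix.mul_nonsing_inv B hB, Matrix.mul_one]
  have e2 : A⁻¹ * A⁻¹ * A * B⁻¹ = A⁻¹ * B⁻¹ := by
    rw [mul_assoc A⁻¹ A⁻¹ A, Matrix.nonsing_inv_mul A hA, Matrix.mul_one]
  have h4 : A⁻¹ * A⁻¹ * (a • B + b₂ • A) * (c • B⁻¹) =
      A⁻¹ * A⁻¹ + (b₂ * c) • (A⁻¹ * B⁻¹) := by
    rw [Matrix.mul_add, Matrix.add_mul]
    simp only [Matrix.mul_smul, Matrix.smul_mul, smul_smul]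
    rw [e1, e2, mul_comm c a, hac, one_smul, mul_comm c b₂]
  rw [h4, Matrix.trace_add, Matrix.trace_smul, Gfun]
  simp [smul_eq_mul]
  exact Or.inl rfl

lemma charpoly_eval' (M : Matrix (Fin N) (Fin N) ℝ) (t : ℝ) :
    M.charpoly.eval t = ((t • (1 : Matrix (Fin N) (Fin N) ℝ)) - M).det := by
  rw [Matrix.charpoly, eval_det, Matrix.matPolyEquiv_charmatrix]
  rw [Polynomial.eval_sub, Polynomial.eval_X, Polynomial.eval_C]
  congr 2
  rw [Matrix.scalar_apply, Matrix.smul_one_eq_diagonal]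

lemma posDef_conj (D V : Matrix (Fin N) (Fin N) ℝ) (hD : D.PosDef)
    (h1 : V * star V = 1) (h2 : star V * V = 1) : (V * D * star V).PosDef := by
  refine Matrix.PosDef.of_dotProduct_mulVec_pos ?_ ?_
  · show (V * D * star V)ᴴ = V * D * star V
    calc (V * D * star V)ᴴ = (star V)ᴴ * (V * D)ᴴ := Matrix.conjTranspose_mul _ _
      _ = (star V)ᴴ * (Dᴴ * Vᴴ) := by rw [Matrix.conjTranspose_mul]
      _ = V * (D * star V) := by rw [hD.1.eq]; rfl
      _ = V * D * star V := by rw [mul_assoc]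
  · intro x hx
    set y := star V *ᵥ x with hydef
    have hy : y ≠ 0 := by
      intro h0
      apply hx
      have : (V * star V) *ᵥ x = V *ᵥ y := by rw [← Matrix.mulVec_mulVec]
      rw [h1, Matrix.one_mulVec, hydef] at this
      rw [this, ← hydef, h0, Matrix.mulVec_zero]
    have hrw : star x ⬝ᵥ ((V * D * star V) *ᵥ x) = star y ⬝ᵥ (D *ᵥ y) := by
      rw [← Matrix.mulVec_mulVec, ← Matrix.mulVec_mulVec]
      rw [Matrix.dotProduct_mulVec (star x) V]
      congr 1
      rw [hydef, Matrix.star_mulVec]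
      simp [Matrix.star_eq_conjTranspose]
    rw [hrw]
    exact hD.dotProduct_mulVec_pos hy

lemma shift_posDef (A : Matrix (Fin N) (Fin N) ℝ) (hpd : A.PosDef) (c : ℝ)
    (hroots : ∀ lam ∈ A.charpoly.roots, c < lam) :
    (A - c • (1 : Matrix (Fin N) (Fin N) ℝ)).PosDef := by
  have hH : A.IsHermitian := hpd.isHermitian
  have hev : ∀ i, c < hH.eigenvalues i := by
    intro i
    apply hroots
    rw [Polynomial.mem_roots']
    refine ⟨A.charpoly_monic.ne_zero, ?_⟩
    show A.charpoly.eval _ = 0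
    rw [charpoly_eval']
    apply Matrix.exists_mulVec_eq_zero_iff.mp
    refine ⟨⇑(hH.eigenvectorBasis i), ?_, ?_⟩
    · have := hH.eigenvectorBasis.orthonormal.ne_zero i
      intro h0
      apply this
      ext k
      exact congrFun h0 k
    · rw [Matrix.sub_mulVec, hH.mulVec_eigenvectorBasis, Matrix.smul_mulVec,
        Matrix.one_mulVec]
      simp
  set V := (hH.eigenvectorUnitary : Matrix (Fin N) (Fin N) ℝ) with hVdef
  have hV1 : V * star V = 1 := Matrix.mem_unitaryGroup_iff.mp hH.eigenvectorUnitary.2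
  have hV2 : star V * V = 1 := Matrix.mem_unitaryGroup_iff'.mp hH.eigenvectorUnitary.2
  have key : A - c • (1 : Matrix (Fin N) (Fin N) ℝ) =
      V * Matrix.diagonal (fun i => hH.eigenvalues i - c) * star V := by
    have hd : Matrix.diagonal (fun i => hH.eigenvalues i - c) =
        Matrix.diagonal (RCLike.ofReal ∘ hH.eigenvalues) -
          c • (1 : Matrix (Fin N) (Fin N) ℝ) := by
      rw [Matrix.smul_one_eq_diagonal, ← Matrix.diagonal_sub]
      congr 1
    rw [hd, Matrix.mul_sub, Matrix.sub_mul]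
    congr 1
    · exact hH.spectral_theorem
    · rw [Matrix.mul_smul, Matrix.smul_mul, Matrix.mul_one, hV1]
  rw [key]
  apply posDef_conj _ _ _ hV1 hV2
  exact Matrix.PosDef.diagonal fun i => sub_pos.2 (hev i)

/-- Lemma 2: the set function `f(∅) = 0`,
`f(S) = C − tr(Q_S⁻²(b₁Q_S − I)((b₁ − b₂)Q_S − I)⁻¹)` for nonempty `S`, with
`C = 2·max_{s ∈ V} tr(Q_{{s}}⁻²(b₁Q_{{s}} − I)((b₁ − b₂)Q_{{s}} − I)⁻¹)`, is
non-decreasing and submodular, where `Q_S = L + D_κ D_S`. -/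
theorem setFunction_order4_monotone_submodular (n : ℕ) (hn : 1 ≤ n)
    (L : Matrix (Fin n) (Fin n) ℝ)
    (hLsymm : L.IsSymm)
    (hLoff : ∀ i j, i ≠ j → L i j ≤ 0)
    (hLrow : ∀ i, ∑ j, L i j = 0)
    (hLker : ∀ x : Fin n → ℝ, L.mulVec x = 0 ↔ ∃ c : ℝ, x = fun _ => c)
    (κ : Fin n → ℝ) (hκ : ∀ i, 0 < κ i)
    (Q : Finset (Fin n) → Matrix (Fin n) (Fin n) ℝ)
    (hQdef : ∀ S, Q S = L + Matrix.diagonal fun i => if i ∈ S then κ i else 0)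
    (hQpos : ∀ S : Finset (Fin n), S.Nonempty → (Q S).PosDef)
    (b₁ b₂ : ℝ) (hb₂ : 0 < b₂) (hb₁₂ : b₂ < b₁)
    (heig : ∀ S : Finset (Fin n), S.Nonempty →
      ∀ lam ∈ (Q S).charpoly.roots, 1 < (b₁ - b₂) * lam)
    (mx : ℝ)
    (hmx : IsGreatest {x : ℝ | ∃ s : Fin n, x =
      Matrix.trace ((Q {s})⁻¹ * (Q {s})⁻¹ *
        (b₁ • Q {s} - (1 : Matrix (Fin n) (Fin n) ℝ)) *
        ((b₁ - b₂) • Q {s} - (1 : Matrix (Fin n) (Fin n) ℝ))⁻¹)} mx)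
    (f : Finset (Fin n) → ℝ)
    (hf0 : f ∅ = 0)
    (hf : ∀ S : Finset (Fin n), S.Nonempty →
      f S = 2 * mx - Matrix.trace ((Q S)⁻¹ * (Q S)⁻¹ *
        (b₁ • Q S - (1 : Matrix (Fin n) (Fin n) ℝ)) *
        ((b₁ - b₂) • Q S - (1 : Matrix (Fin n) (Fin n) ℝ))⁻¹)) :
    (∀ A B : Finset (Fin n), A ⊆ B → f A ≤ f B) ∧
    (∀ A B : Finset (Fin n), f (A ∪ B) + f (A ∩ B) ≤ f A + f B) := by
  have hab : 0 < b₁ - b₂ := sub_pos.mpr hb₁₂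
  set c : ℝ := (b₁ - b₂)⁻¹ with hcdef
  set γ : ℝ := b₂ * (b₁ - b₂)⁻¹ with hγdef
  have hγ : 0 ≤ γ := mul_nonneg hb₂.le (inv_pos.mpr hab).le
  -- every Q S (nonempty S) is in the good class
  have hZ : ∀ S : Finset (Fin n), S.Nonempty → ZGood c (Q S) := by
    intro S hS
    refine ⟨hQpos S hS, ?_, ?_⟩
    · apply shift_posDef (Q S) (hQpos S hS) c
      intro lam hmem
      have h1 := heig S hS lam hmem
      have hc : 0 < (b₁ - b₂)⁻¹ := inv_pos.mpr hab
      rw [hcdef]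
      nlinarith [mul_inv_cancel₀ hab.ne']
    · intro i j hij
      rw [hQdef S]
      simp only [Matrix.add_apply, Matrix.diagonal_apply_ne _ hij, add_zero]
      exact hLoff i j hij
  -- the trace expression equals Gfun
  have htr : ∀ S : Finset (Fin n), S.Nonempty →
      Matrix.trace ((Q S)⁻¹ * (Q S)⁻¹ *
        (b₁ • Q S - (1 : Matrix (Fin n) (Fin n) ℝ)) *
        ((b₁ - b₂) • Q S - (1 : Matrix (Fin n) (Fin n) ℝ))⁻¹) = Gfun c γ (Q S) := by
    intro S hS
    exact trace_eq_Gfun b₁ b₂ hb₂ hab (Q S) (hZ S hS).detA (hZ S hS).detB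
  have hfG : ∀ S : Finset (Fin n), S.Nonempty → f S = 2 * mx - Gfun c γ (Q S) := by
    intro S hS
    rw [hf S hS, htr S hS]
  -- antitonicity at the level of sets
  have hGanti : ∀ S T : Finset (Fin n), S.Nonempty → S ⊆ T →
      Gfun c γ (Q T) ≤ Gfun c γ (Q S) := by
    intro S T hS hST
    set d : Fin n → ℝ := fun i =>
      (if i ∈ T then κ i else 0) - (if i ∈ S then κ i else 0) with hddef
    have hd : ∀ i, 0 ≤ d i := by
      intro i
      rw [hddef]
      by_cases hiS : i ∈ S
      · have hiT := hST hiS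
        simp [hiS, hiT]
      · by_cases hiT : i ∈ T
        · simp [hiS, hiT, (hκ i).le]
        · simp [hiS, hiT]
    have he : Q T = Q S + Matrix.diagonal d := by
      rw [hQdef T, hQdef S, add_assoc, Matrix.diagonal_add]
      congr 1
      exact congrArg Matrix.diagonal (funext fun i => by rw [hddef]; ring)
    have := Gfun_antitone c γ hγ (Q S) d hd (hZ S hS)
      (by rw [← he]; exact hZ T (hS.mono hST))
    rwa [← he] at this
  -- singleton bound
  have hGle : ∀ S : Finset (Fin n), S.Nonempty → Gfun c γ (Q S) ≤ mx := by
    intro S hS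
    obtain ⟨s, hs⟩ := hS
    have h1 := hGanti {s} S ⟨s, Finset.mem_singleton_self s⟩
      (Finset.singleton_subset_iff.mpr hs)
    have h2 : Gfun c γ (Q {s}) ≤ mx := by
      have := hmx.2 ⟨s, rfl⟩
      rwa [htr {s} ⟨s, Finset.mem_singleton_self s⟩] at this
    linarith
  have hG0 : ∀ S : Finset (Fin n), S.Nonempty → 0 ≤ Gfun c γ (Q S) :=
    fun S hS => Gfun_nonneg hγ (hZ S hS)
  have hmx0 : 0 ≤ mx := by
    obtain ⟨s₀, hs₀⟩ := hmx.1
    rw [hs₀, htr {s₀} ⟨s₀, Finset.mem_singleton_self s₀⟩]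
    exact hG0 {s₀} ⟨s₀, Finset.mem_singleton_self s₀⟩
  constructor
  · -- monotone
    intro A B hAB
    by_cases hA : A = ∅
    · subst hA
      rw [hf0]
      by_cases hB : B = ∅
      · subst hB; rw [hf0]
      · have hBne : B.Nonempty := Finset.nonempty_iff_ne_empty.mpr hB
        rw [hfG B hBne]
        linarith [hGle B hBne]
    · have hAne : A.Nonempty := Finset.nonempty_iff_ne_empty.mpr hA
      have hBne : B.Nonempty := hAne.mono hAB
      rw [hfG A hAne, hfG B hBne]
      linarith [hGanti A B hAne hAB]
  · -- submodular
    intro A B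
    by_cases hA : A = ∅
    · subst hA
      rw [Finset.empty_union, Finset.empty_inter, hf0]
      linarith
    by_cases hB : B = ∅
    · subst hB
      rw [Finset.union_empty, Finset.inter_empty, hf0]
    have hAne : A.Nonempty := Finset.nonempty_iff_ne_empty.mpr hA
    have hBne : B.Nonempty := Finset.nonempty_iff_ne_empty.mpr hB
    have hUne : (A ∪ B).Nonempty := hAne.mono Finset.subset_union_left
    by_cases hI : A ∩ B = ∅
    · rw [hI, hf0, hfG A hAne, hfG B hBne, hfG (A ∪ B) hUne]
      have h1 := hGle A hAne
      have h2 := hGle B hBne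
      have h3 := hG0 (A ∪ B) hUne
      linarith
    · have hIne : (A ∩ B).Nonempty := Finset.nonempty_iff_ne_empty.mpr hI
      set C := A ∩ B with hCdef
      set dM : Fin n → ℝ := fun i =>
        (if i ∈ A then κ i else 0) - (if i ∈ C then κ i else 0) with hdMdef
      set dN : Fin n → ℝ := fun i =>
        (if i ∈ B then κ i else 0) - (if i ∈ C then κ i else 0) with hdNdef
      have hCA : C ⊆ A := Finset.inter_subset_left
      have hCB : C ⊆ B := Finset.inter_subset_right
      have hdM : ∀ i, 0 ≤ dM i := by
        intro i
        rw [hdMdef]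
        by_cases hiC : i ∈ C
        · have hiA := hCA hiC; simp [hiA, hiC]
        · by_cases hiA : i ∈ A
          · simp [hiA, hiC, (hκ i).le]
          · simp [hiA, hiC]
      have hdN : ∀ i, 0 ≤ dN i := by
        intro i
        rw [hdNdef]
        by_cases hiC : i ∈ C
        · have hiB := hCB hiC; simp [hiB, hiC]
        · by_cases hiB : i ∈ B
          · simp [hiB, hiC, (hκ i).le]
          · simp [hiB, hiC]
      have hsplit : ∀ S T : Finset (Fin n), Q T = Q S + Matrix.diagonal (fun i =>
          (if i ∈ T then κ i else 0) - (if i ∈ S then κ i else 0)) := by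
        intro S T
        rw [hQdef T, hQdef S, add_assoc, Matrix.diagonal_add]
        congr 1
        exact congrArg Matrix.diagonal (funext fun i => by ring)
      have heA : Q A = Q C + Matrix.diagonal dM := by
        rw [hdMdef]; exact hsplit C A
      have heB : Q B = Q C + Matrix.diagonal dN := by
        rw [hdNdef]; exact hsplit C B
      have heU : Q (A ∪ B) = Q A + Matrix.diagonal dN := by
        rw [hsplit A (A ∪ B)]
        congr 1
        refine congrArg Matrix.diagonal (funext fun i => ?_)
        rw [hdNdef, hCdef]
        by_cases hiA : i ∈ A <;> by_cases hiB : i ∈ B <;>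
          simp [Finset.mem_union, Finset.mem_inter, hiA, hiB]
      have hsup := Gfun_supermod c γ hγ (Q C) dM dN hdM hdN (hZ C hIne)
        (by rw [← heA]; exact hZ A hAne)
        (by rw [← heB]; exact hZ B hBne)
        (by rw [← heA, ← heU]; exact hZ (A ∪ B) hUne)
      rw [← heA, ← heB, ← heU] at hsup
      rw [hfG A hAne, hfG B hBne, hfG (A ∪ B) hUne, hfG C hIne]
      linarith
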